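/- If F ∈ ℝ^{n×n} and G ∈ ℝ^{n×p} satisfy F Fᵀ + G Gᵀ = I_n, then there exist H ∈ ℝ^{p×n} and J ∈ ℝ^{p×p} such that the (n+p)×(n+p) block matrix U = [[F, G], [H, J]] is orthogonal, i.e., U Uᵀ = Uᵀ U = I_{n+p}. -/

import Mathlib

open Matrix

theorem stmt_1 {n p : ℕ} (F : Matrix (Fin n) (Fin n) ℝ) (G : Matrix (Fin n) (Fin p) ℝ)
    (h : F * Fᵀ + G * Gᵀ = 1) :
    ∃ (H : Matrix (Fin p) (Fin n) ℝ) (J : Matrix (Fin p) (Fin p) ℝ),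
      Matrix.fromBlocks F G H J * (Matrix.fromBlocks F G H J)ᵀ = 1 ∧
      (Matrix.fromBlocks F G H J)ᵀ * Matrix.fromBlocks F G H J = 1 := by
  classical
  set E := EuclideanSpace ℝ (Fin n ⊕ Fin p)
  have card_eq : Module.finrank ℝ E = Fintype.card (Fin n ⊕ Fin p) := by
    simp [E, finrank_euclideanSpace]
  -- the candidate family: rows of [F G]
  set v : (Fin n ⊕ Fin p) → E := fun i =>
    Sum.elim (fun a => WithLp.toLp 2 (Sum.elim (F a) (G a) : (Fin n ⊕ Fin p) → ℝ)) (fun _ => 0) i with hv_def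
  have hentry : ∀ a b : Fin n,
      (∑ k, F a k * F b k) + (∑ k, G a k * G b k) = if a = b then (1:ℝ) else 0 := by
    intro a b
    have := congrFun (congrFun h a) b
    simpa [Matrix.add_apply, Matrix.mul_apply, Matrix.transpose_apply, Matrix.one_apply]
      using this
  have hv : Orthonormal ℝ ((Set.range (Sum.inl : Fin n → Fin n ⊕ Fin p)).restrict v) := by
    rw [orthonormal_iff_ite]
    rintro ⟨_, a, rfl⟩ ⟨_, b, rfl⟩
    have : (inner ℝ (v (Sum.inl a)) (v (Sum.inl b)) : ℝ)
        = (∑ k, F a k * F b k) + (∑ k, G a k * G b k) := by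
      simp [E, PiLp.inner_apply, RCLike.inner_apply, hv_def, Fintype.sum_sum_type, mul_comm]
    change inner ℝ (v (Sum.inl a)) (v (Sum.inl b)) = _
    rw [this, hentry a b]
    simp [Subtype.ext_iff]
  obtain ⟨b, hb⟩ := hv.exists_orthonormalBasis_extension_of_card_eq card_eq
  refine ⟨Matrix.of fun j i => b (Sum.inr j) (Sum.inl i),
          Matrix.of fun j i => b (Sum.inr j) (Sum.inr i), ?_⟩
  have hU : Matrix.fromBlocks F G (Matrix.of fun j i => b (Sum.inr j) (Sum.inl i))
      (Matrix.of fun j i => b (Sum.inr j) (Sum.inr i)) = Matrix.of fun i j => b i j := by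
    ext i j
    cases i with
    | inl a =>
      have hba : b (Sum.inl a) = v (Sum.inl a) := hb _ ⟨a, rfl⟩
      cases j <;> simp [hba, hv_def]
    | inr a => cases j <;> simp
  rw [hU]
  have hUUT : (Matrix.of fun i j => b i j) * (Matrix.of fun i j => b i j)ᵀ = 1 := by
    ext i j
    have := (orthonormal_iff_ite.mp b.orthonormal) i j
    simp only [E, PiLp.inner_apply, RCLike.inner_apply, starRingEnd_apply, star_trivial, Fintype.sum_sum_type] at this
    simp [Matrix.mul_apply, Matrix.transpose_apply, Matrix.one_apply, mul_comm]
    simpa [mul_comm] using this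
  exact ⟨hUUT, mul_eq_one_comm.mp hUUT⟩
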